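/- A positive real affine root α satisfies ℓ(s_α) = 2ht(α∨) − 1 if and only if either α is simple, or there exist indices i_1,...,i_k ∈ {0,...,n} with k ≥ 2 such that: each root s_{i_j}···s_{i_2}(α_{i_1}) satisfies ℓ of its reflection equal to 2·(height of its coroot) − 1, ⟨α_{i_j}, s_{i_{j−1}}···s_{i_2}(α_{i_1})∨⟩ = −1 for all 2 ≤ j ≤ k, α = s_{i_k}···s_{i_2}(α_{i_1}), and s_α = s_{i_k}···s_{i_2}s_{i_1}s_{i_2}···s_{i_k} is a reduced expression. In that case α∨ = α_{i_1}∨ + ··· + α_{i_k}∨. -/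

import Mathlib

/-- Elements of the affine root lattice (resp. affine coroot lattice) of the affine
(untwisted) Kac–Moody root system, written in coordinates with respect to the simple
roots `α_0, …, α_n` (resp. the simple coroots `α_0∨, …, α_n∨`).  The dominance
(partial) order `a ≤ b` (meaning `b - a` is a nonnegative combination of the simple
roots/coroots) is the coordinatewise order. -/
abbrev AffLat (n : ℕ) := Fin (n + 1) → ℤ

/-- The `i`-th simple root (resp. simple coroot) as a coordinate vector. -/
def simpleVec {n : ℕ} (i : Fin (n + 1)) : AffLat n := Pi.single i 1

/-- The height of a root (resp. coroot): the sum of its coordinates in the basis of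
simple roots (resp. simple coroots). -/
def htv {n : ℕ} (a : AffLat n) : ℤ := ∑ j, a j

/-- `a` is a simple root (a standard basis vector). -/
def IsSimpleVec {n : ℕ} (a : AffLat n) : Prop := ∃ i, a = simpleVec i

/-- Axiomatization of the affine (untwisted) Kac–Moody root system attached to a
finite simple Lie algebra, together with its affine Weyl group `W` (a Coxeter group
with simple reflections `s_0, …, s_n`), its action on the root and coroot lattices,
the coroot map `α ↦ α∨` on real roots, the reflection map `α ↦ s_α`, and the
imaginary coroot `c = α_0∨ + θ∨`. -/
structure AffineRootSystem (n : ℕ) (W : Type*) [Group W] where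
  /-- the affine Cartan matrix: `cartan i j = ⟨α_j, α_i∨⟩` -/
  cartan : Fin (n + 1) → Fin (n + 1) → ℤ
  cartan_diag : ∀ i, cartan i i = 2
  cartan_offdiag : ∀ i j, i ≠ j → cartan i j ≤ 0
  cartan_symm_zero : ∀ i j, cartan i j = 0 → cartan j i = 0
  /-- the Coxeter matrix of the affine Weyl group -/
  M : CoxeterMatrix (Fin (n + 1))
  /-- the affine Weyl group, as a Coxeter system with simple reflections
  `cs.simple 0, …, cs.simple n` and Coxeter length `cs.length` -/
  cs : CoxeterSystem M W
  /-- the action of the affine Weyl group on the root lattice -/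
  actR : W → AffLat n → AffLat n
  actR_one : ∀ a, actR 1 a = a
  actR_mul : ∀ u v a, actR (u * v) a = actR u (actR v a)
  actR_add : ∀ w a b, actR w (a + b) = actR w a + actR w b
  actR_simple : ∀ i a, actR (cs.simple i) a = a - (∑ k, cartan i k * a k) • simpleVec i
  /-- the action of the affine Weyl group on the coroot lattice -/
  actC : W → AffLat n → AffLat n
  actC_one : ∀ b, actC 1 b = b
  actC_mul : ∀ u v b, actC (u * v) b = actC u (actC v b)
  actC_add : ∀ w a b, actC w (a + b) = actC w a + actC w b
  actC_simple : ∀ i b, actC (cs.simple i) b = b - (∑ k, cartan k i * b k) • simpleVec i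
  /-- the coroot `α∨` of a real root `α` -/
  coroot : AffLat n → AffLat n
  coroot_simple : ∀ i, coroot (simpleVec i) = simpleVec i
  coroot_act : ∀ w a, coroot (actR w a) = actC w (coroot a)
  /-- the reflection `s_α ∈ W` of a real root `α` -/
  refl : AffLat n → W
  refl_simple : ∀ i, refl (simpleVec i) = cs.simple i
  refl_act : ∀ w a, refl (actR w a) = w * refl a * w⁻¹
  /-- the coordinates of the imaginary coroot `c = α_0∨ + θ∨` in the basis of simple
  coroots; thus `imag 0 = 1` and `imag i = m_i` for `i ≥ 1`, where
  `θ∨ = m_1 α_1∨ + ⋯ + m_n α_n∨` -/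
  imag : AffLat n
  imag_zero : imag 0 = 1
  imag_pos : ∀ i, 1 ≤ imag i
  imag_invariant : ∀ w, actC w imag = imag
  /-- the standard relation between lengths and positivity of roots:
  `ℓ(w s_α) < ℓ(w)` iff `w(α) < 0` -/
  length_refl_lt_iff : ∀ a : AffLat n, (∃ w i, a = actR w (simpleVec i)) → 0 ≤ a →
    ∀ w : W, cs.length (w * refl a) < cs.length w ↔ actR w a ≤ 0

namespace AffineRootSystem

variable {n : ℕ} {W : Type*} [Group W] (R : AffineRootSystem n W)

/-- `α` is a positive real root of the affine root system. -/
def IsPosRoot (a : AffLat n) : Prop := (∃ w i, a = R.actR w (simpleVec i)) ∧ 0 ≤ a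

/-- The evaluation pairing `⟨α, β∨⟩` of a root `α` (coordinates w.r.t. the simple
roots) against a coroot `β∨` (coordinates w.r.t. the simple coroots), computed via
the affine Cartan matrix `cartan i k = ⟨α_k, α_i∨⟩`. -/
def pairing (a b : AffLat n) : ℤ := ∑ i, ∑ k, b i * (R.cartan i k * a k)

/-- `α` belongs to the set `Π̃` of positive real roots with `ℓ(s_α) = 2 ht(α∨) - 1`
(the roots appearing in the affine quantum Chevalley formula). -/
def IsChevalleyRoot (a : AffLat n) : Prop :=
  R.IsPosRoot a ∧ (R.cs.length (R.refl a) : ℤ) = 2 * htv (R.coroot a) - 1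

end AffineRootSystem

namespace AffineRootSystem

variable {n : ℕ} {W : Type*} [Group W]

/-- A "Chevalley chain" of length `k` for the affine root system: indices
`f 0, …, f (k-1)` of simple roots and the associated sequence of roots
`β 0 = α_{f 0}`, `β (j+1) = s_{f (j+1)} (β j)`, such that each `β j` lies in `Π̃`
(i.e. `ℓ(s_{β j}) = 2 ht((β j)∨) - 1`), each pairing
`⟨α_{f (j+1)}, (β j)∨⟩ = -1`, and the palindromic expression
`s_{β (k-1)} = s_{f (k-1)} ⋯ s_{f 1} s_{f 0} s_{f 1} ⋯ s_{f (k-1)}` is reduced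
(equivalently `ℓ(s_{β (k-1)}) = 2k - 1`). -/
def IsChevalleyChain (R : AffineRootSystem n W) (k : ℕ) (f : ℕ → Fin (n + 1))
    (β : ℕ → AffLat n) : Prop :=
  β 0 = simpleVec (f 0) ∧
  (∀ j, j + 1 < k → β (j + 1) = R.actR (R.cs.simple (f (j + 1))) (β j)) ∧
  (∀ j, j < k → R.IsChevalleyRoot (β j)) ∧
  (∀ j, j + 1 < k → R.pairing (simpleVec (f (j + 1))) (R.coroot (β j)) = -1) ∧
  R.cs.length (R.refl (β (k - 1))) = 2 * k - 1

end AffineRootSystem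

namespace AffineRootSystem

section Infra

variable {n : ℕ} {W : Type*} [Group W] (R : AffineRootSystem n W)

lemma simpleVec_apply (i k : Fin (n + 1)) : simpleVec i k = if k = i then 1 else 0 := by
  simp [simpleVec, Pi.single_apply]

lemma simpleVec_nonneg (i : Fin (n + 1)) : (0 : AffLat n) ≤ simpleVec i := by
  intro k
  simp only [simpleVec_apply, Pi.zero_apply]
  split <;> omega

lemma sum_mul_simpleVec (g : Fin (n + 1) → ℤ) (i : Fin (n + 1)) :
    ∑ k, g k * simpleVec i k = g i := by
  simp [simpleVec_apply, mul_ite, Finset.sum_ite_eq']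

lemma sum_simpleVec_mul (g : Fin (n + 1) → ℤ) (i : Fin (n + 1)) :
    ∑ k, simpleVec i k * g k = g i := by
  simp [simpleVec_apply, ite_mul, Finset.sum_ite_eq']

lemma htv_simpleVec (i : Fin (n + 1)) : htv (simpleVec i) = 1 := by
  simp [htv, simpleVec_apply, Finset.sum_ite_eq']

lemma htv_sub_smul (b : AffLat n) (c : ℤ) (k : Fin (n + 1)) :
    htv (b - c • simpleVec k) = htv b - c := by
  simp only [htv, Pi.sub_apply, Pi.smul_apply, smul_eq_mul, Finset.sum_sub_distrib,
    ← Finset.mul_sum]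
  rw [show ∑ j, simpleVec k j = 1 by simp [simpleVec_apply, Finset.sum_ite_eq']]
  ring

lemma pairing_simple_right (a : AffLat n) (i : Fin (n + 1)) :
    R.pairing a (simpleVec i) = ∑ k, R.cartan i k * a k := by
  unfold pairing
  rw [Finset.sum_eq_single i]
  · simp [simpleVec_apply]
  · intro j _ hj
    simp [simpleVec_apply, hj]
  · simp

lemma pairing_eq_right (a b : AffLat n) :
    R.pairing a b = ∑ i, b i * R.pairing a (simpleVec i) := by
  simp only [pairing_simple_right]
  unfold pairing
  exact Finset.sum_congr rfl fun i _ => (Finset.mul_sum _ _ _).symm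

lemma pairing_simple_left (b : AffLat n) (i : Fin (n + 1)) :
    R.pairing (simpleVec i) b = ∑ j, b j * R.cartan j i := by
  unfold pairing
  refine Finset.sum_congr rfl fun j _ => ?_
  rw [← Finset.mul_sum]
  congr 1
  rw [Finset.sum_eq_single i]
  · simp [simpleVec_apply]
  · intro m _ hm
    simp [simpleVec_apply, hm]
  · simp

lemma pairing_eq_left (a b : AffLat n) :
    R.pairing a b = ∑ k, a k * R.pairing (simpleVec k) b := by
  simp only [pairing_simple_left]
  unfold pairing
  rw [Finset.sum_comm]
  refine Finset.sum_congr rfl fun k _ => ?_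
  rw [Finset.mul_sum]
  exact Finset.sum_congr rfl fun i _ => by ring

lemma pairing_simple_simple (i k : Fin (n + 1)) :
    R.pairing (simpleVec k) (simpleVec i) = R.cartan i k := by
  rw [pairing_simple_right, sum_mul_simpleVec (R.cartan i) k]

lemma pairing_sub_smul_right (a b : AffLat n) (c : ℤ) (k : Fin (n + 1)) :
    R.pairing a (b - c • simpleVec k) = R.pairing a b - c * R.pairing a (simpleVec k) := by
  rw [pairing_eq_right, pairing_eq_right R a b]
  simp only [Pi.sub_apply, Pi.smul_apply, smul_eq_mul, sub_mul, mul_assoc,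
    Finset.sum_sub_distrib, ← Finset.mul_sum]
  congr 1
  congr 1
  exact sum_simpleVec_mul (fun i => R.pairing a (simpleVec i)) k

lemma pairing_sub_smul_left (a b : AffLat n) (c : ℤ) (k : Fin (n + 1)) :
    R.pairing (a - c • simpleVec k) b = R.pairing a b - c * R.pairing (simpleVec k) b := by
  rw [pairing_eq_left, pairing_eq_left R a b]
  simp only [Pi.sub_apply, Pi.smul_apply, smul_eq_mul, sub_mul, mul_assoc,
    Finset.sum_sub_distrib, ← Finset.mul_sum]
  congr 1
  congr 1
  exact sum_simpleVec_mul (fun i => R.pairing (simpleVec i) b) k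

lemma actR_simple' (i : Fin (n + 1)) (a : AffLat n) :
    R.actR (R.cs.simple i) a = a - R.pairing a (simpleVec i) • simpleVec i := by
  rw [R.actR_simple i a, pairing_simple_right]

lemma actC_simple' (i : Fin (n + 1)) (b : AffLat n) :
    R.actC (R.cs.simple i) b = b - R.pairing (simpleVec i) b • simpleVec i := by
  rw [R.actC_simple i b, pairing_simple_left]
  congr 2
  refine Finset.sum_congr rfl fun j _ => ?_
  ring

/-- `actR w` as an additive monoid hom. -/
def actRHom (w : W) : AffLat n →+ AffLat n := AddMonoidHom.mk' (R.actR w) (R.actR_add w)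

lemma actR_zsmul (w : W) (c : ℤ) (a : AffLat n) : R.actR w (c • a) = c • R.actR w a :=
  map_zsmul (R.actRHom w) c a

lemma actR_sub (w : W) (a b : AffLat n) : R.actR w (a - b) = R.actR w a - R.actR w b :=
  map_sub (R.actRHom w) a b

lemma actR_neg (w : W) (a : AffLat n) : R.actR w (-a) = -R.actR w a :=
  map_neg (R.actRHom w) a

lemma actR_inv_actR (w : W) (a : AffLat n) : R.actR w⁻¹ (R.actR w a) = a := by
  rw [← R.actR_mul, inv_mul_cancel, R.actR_one]

lemma actR_actR_inv (w : W) (a : AffLat n) : R.actR w (R.actR w⁻¹ a) = a := by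
  rw [← R.actR_mul, mul_inv_cancel, R.actR_one]

def actCHom (w : W) : AffLat n →+ AffLat n := AddMonoidHom.mk' (R.actC w) (R.actC_add w)

lemma actC_inv_actC (w : W) (b : AffLat n) : R.actC w⁻¹ (R.actC w b) = b := by
  rw [← R.actC_mul, inv_mul_cancel, R.actC_one]

lemma pairing_act (w : W) (a b : AffLat n) :
    R.pairing (R.actR w a) (R.actC w b) = R.pairing a b := by
  induction w using R.cs.simple_induction generalizing a b with
  | simple i =>
    rw [actR_simple', actC_simple', pairing_sub_smul_right, pairing_sub_smul_left,
      pairing_sub_smul_left, pairing_simple_simple, R.cartan_diag]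
    ring
  | one => rw [R.actR_one, R.actC_one]
  | mul u v hu hv =>
    rw [R.actR_mul, R.actC_mul, hu, hv]

lemma coroot_posRoot {a : AffLat n} (w : W) (i : Fin (n + 1))
    (hwa : a = R.actR w (simpleVec i)) : R.coroot a = R.actC w (simpleVec i) := by
  rw [hwa, R.coroot_act, R.coroot_simple]

lemma pairing_coroot_self {a : AffLat n} (hreal : ∃ w i, a = R.actR w (simpleVec i)) :
    R.pairing a (R.coroot a) = 2 := by
  obtain ⟨w, i, rfl⟩ := hreal
  rw [R.coroot_act, R.coroot_simple, pairing_act, pairing_simple_simple, R.cartan_diag]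

lemma refl_mul_self {a : AffLat n} (hreal : ∃ w i, a = R.actR w (simpleVec i)) :
    R.refl a * R.refl a = 1 := by
  obtain ⟨w, i, rfl⟩ := hreal
  rw [R.refl_act, R.refl_simple]
  have h : w * R.cs.simple i * w⁻¹ * (w * R.cs.simple i * w⁻¹) =
      w * (R.cs.simple i * R.cs.simple i) * w⁻¹ := by group
  rw [h, R.cs.simple_mul_simple_self, mul_one, mul_inv_cancel]

lemma refl_inv {a : AffLat n} (hreal : ∃ w i, a = R.actR w (simpleVec i)) :
    (R.refl a)⁻¹ = R.refl a :=
  (eq_inv_of_mul_eq_one_left (R.refl_mul_self hreal)).symm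

lemma actR_refl {a : AffLat n} (hreal : ∃ w i, a = R.actR w (simpleVec i)) (b : AffLat n) :
    R.actR (R.refl a) b = b - R.pairing b (R.coroot a) • a := by
  obtain ⟨w, i, rfl⟩ := hreal
  rw [R.refl_act, R.refl_simple, R.actR_mul, R.actR_mul, actR_simple', actR_sub, actR_zsmul,
    actR_actR_inv]
  congr 2
  rw [R.coroot_act, R.coroot_simple]
  conv_lhs => rw [← R.actC_inv_actC w (simpleVec i)]
  exact R.pairing_act w⁻¹ b _

lemma actR_simple_self (k : Fin (n + 1)) :
    R.actR (R.cs.simple k) (simpleVec k) = -simpleVec k := by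
  rw [actR_simple', pairing_simple_simple, R.cartan_diag]
  ext m
  simp only [Pi.sub_apply, Pi.smul_apply, smul_eq_mul, Pi.neg_apply]
  ring

lemma actR_le_zero_iff (w : W) (i : Fin (n + 1)) :
    R.actR w (simpleVec i) ≤ 0 ↔ R.cs.length (w * R.cs.simple i) < R.cs.length w := by
  have h := R.length_refl_lt_iff (simpleVec i) ⟨1, i, (R.actR_one _).symm⟩
    (simpleVec_nonneg i) w
  rw [R.refl_simple] at h
  exact h.symm

lemma zero_le_actR_iff (w : W) (i : Fin (n + 1)) :
    0 ≤ R.actR w (simpleVec i) ↔ R.cs.length w < R.cs.length (w * R.cs.simple i) := by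
  have h := R.actR_le_zero_iff (w * R.cs.simple i) i
  rw [R.actR_mul, actR_simple_self, actR_neg, mul_assoc, R.cs.simple_mul_simple_self,
    mul_one] at h
  rw [← h, neg_nonpos]

lemma actR_sign (w : W) (i : Fin (n + 1)) :
    0 ≤ R.actR w (simpleVec i) ∨ R.actR w (simpleVec i) ≤ 0 := by
  rcases Nat.lt_or_ge (R.cs.length w) (R.cs.length (w * R.cs.simple i)) with h | h
  · exact Or.inl ((R.zero_le_actR_iff w i).mpr h)
  · refine Or.inr ((R.actR_le_zero_iff w i).mpr ?_)
    rcases lt_or_eq_of_le h with h' | h'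
    · exact h'
    · exact absurd h' (R.cs.length_mul_simple_ne w i)

lemma eq_simpleVec_of_support {a : AffLat n} (w : W) (i : Fin (n + 1))
    (hwa : a = R.actR w (simpleVec i)) (ha : 0 ≤ a) (k : Fin (n + 1))
    (hsupp : ∀ m, m ≠ k → a m = 0) : a = simpleVec k := by
  have hrepr : a = a k • simpleVec k := by
    ext m
    by_cases hm : m = k
    · subst hm; simp [simpleVec_apply]
    · simp [simpleVec_apply, hm, hsupp m hm]
  have h1 : simpleVec i = a k • R.actR w⁻¹ (simpleVec k) := by
    rw [← actR_zsmul, ← hrepr, hwa, actR_inv_actR]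
  have h2 : (1 : ℤ) = a k * R.actR w⁻¹ (simpleVec k) i := by
    have := congrFun h1 i
    simpa [simpleVec_apply] using this
  have hk : 0 ≤ a k := ha k
  have : a k = 1 := by
    rcases Int.isUnit_iff.mp (IsUnit.of_mul_eq_one _ h2.symm) with h | h <;> omega
  rw [hrepr, this, one_smul]

lemma posRoot_actR_simple {a : AffLat n} (ha : R.IsPosRoot a) (k : Fin (n + 1)) :
    ∃ w i, R.actR (R.cs.simple k) a = R.actR w (simpleVec i) := by
  obtain ⟨⟨w, i, rfl⟩, _⟩ := ha
  exact ⟨R.cs.simple k * w, i, by rw [R.actR_mul]⟩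

/-- The key length computation: if `a` is a positive real root, `a k ≥ 1`,
`⟨α_k, a∨⟩ ≥ 1`, and `s_k a ≥ 0`, then `ℓ(s_{s_k a}) + 2 = ℓ(s_a)`. -/
lemma length_step {a : AffLat n} (ha : R.IsPosRoot a) (k : Fin (n + 1))
    (hak : 1 ≤ a k) (hp : 1 ≤ R.pairing (simpleVec k) (R.coroot a))
    (hb : 0 ≤ R.actR (R.cs.simple k) a) :
    R.cs.length (R.refl (R.actR (R.cs.simple k) a)) + 2 = R.cs.length (R.refl a) := by
  obtain ⟨hreal, hpos⟩ := ha
  set p := R.pairing (simpleVec k) (R.coroot a) with hpdef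
  set β := R.actR (R.cs.simple k) a with hβdef
  -- step 1 : ℓ(s_a * s_k) < ℓ(s_a)
  have h1 : R.actR (R.refl a) (simpleVec k) = simpleVec k - p • a := by
    rw [R.actR_refl hreal]
  have h1' : R.actR (R.refl a) (simpleVec k) ≤ 0 := by
    rw [h1]
    intro m
    simp only [Pi.sub_apply, Pi.smul_apply, smul_eq_mul, Pi.zero_apply, simpleVec_apply]
    have ham : 0 ≤ a m := hpos m
    by_cases hm : m = k
    · subst hm
      simp only [if_pos rfl, if_true]
      nlinarith
    · simp only [if_neg hm, if_false]
      nlinarith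
  have h2 : R.cs.length (R.refl a * R.cs.simple k) < R.cs.length (R.refl a) := by
    have := R.length_refl_lt_iff (simpleVec k) ⟨1, k, (R.actR_one _).symm⟩
      (simpleVec_nonneg k) (R.refl a)
    rw [R.refl_simple] at this
    exact this.mpr h1'
  have h3 : R.cs.length (R.refl a * R.cs.simple k) + 1 = R.cs.length (R.refl a) := by
    rcases R.cs.length_mul_simple (R.refl a) k with h | h
    · omega
    · exact h
  -- step 2 : ℓ(s_k * s_a) = ℓ(s_a * s_k)
  have h4 : R.cs.length (R.cs.simple k * R.refl a) = R.cs.length (R.refl a * R.cs.simple k) := by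
    have : (R.cs.simple k * R.refl a)⁻¹ = R.refl a * R.cs.simple k := by
      rw [mul_inv_rev, R.refl_inv hreal, R.cs.inv_simple]
    rw [← this, R.cs.length_inv]
  -- step 3 : ℓ(s_k * s_a * s_k) < ℓ(s_k * s_a)
  have h5 : R.actR (R.cs.simple k * R.refl a) (simpleVec k) = -simpleVec k - p • β := by
    rw [R.actR_mul, h1, actR_sub, actR_zsmul, actR_simple_self, ← hβdef]
  have h5' : R.actR (R.cs.simple k * R.refl a) (simpleVec k) ≤ 0 := by
    rw [h5]
    intro m
    simp only [Pi.sub_apply, Pi.neg_apply, Pi.smul_apply, smul_eq_mul, Pi.zero_apply,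
      simpleVec_apply]
    have hbm : 0 ≤ β m := hb m
    by_cases hm : m = k
    · subst hm
      simp only [if_pos rfl, if_true]
      nlinarith
    · simp only [if_neg hm, if_false]
      nlinarith
  have h6 : R.cs.length (R.cs.simple k * R.refl a * R.cs.simple k) <
      R.cs.length (R.cs.simple k * R.refl a) := by
    have := R.length_refl_lt_iff (simpleVec k) ⟨1, k, (R.actR_one _).symm⟩
      (simpleVec_nonneg k) (R.cs.simple k * R.refl a)
    rw [R.refl_simple] at this
    exact this.mpr h5'
  have h7 : R.cs.length (R.cs.simple k * R.refl a * R.cs.simple k) + 1 =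
      R.cs.length (R.cs.simple k * R.refl a) := by
    rcases R.cs.length_mul_simple (R.cs.simple k * R.refl a) k with h | h
    · omega
    · exact h
  -- conclude
  have h8 : R.refl β = R.cs.simple k * R.refl a * R.cs.simple k := by
    rw [hβdef, R.refl_act, R.cs.inv_simple]
  rw [h8]
  omega

lemma exists_good_index {a : AffLat n} (ha : R.IsPosRoot a) :
    ∃ k, 1 ≤ a k ∧ 1 ≤ R.pairing (simpleVec k) (R.coroot a) := by
  have h2 : R.pairing a (R.coroot a) = 2 := R.pairing_coroot_self ha.1
  rw [pairing_eq_left] at h2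
  by_contra hcon
  push_neg at hcon
  have hle : ∀ k ∈ Finset.univ, a k * R.pairing (simpleVec k) (R.coroot a) ≤ 0 := by
    intro k _
    have hk := ha.2 k
    simp only [Pi.zero_apply] at hk
    rcases lt_or_ge (a k) 1 with h | h
    · have : a k = 0 := by omega
      rw [this, zero_mul]
    · have := hcon k h
      nlinarith
  have := Finset.sum_nonpos hle
  omega

/-- The dichotomy step: for a positive real root `a` with a good index `k`,
either `a = α_k`, or `β = s_k a` is a positive real root with
`β∨ = a∨ - ⟨α_k, a∨⟩ α_k∨` and `ℓ(s_β) + 2 = ℓ(s_a)`. -/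
lemma step_dichotomy {a : AffLat n} (ha : R.IsPosRoot a) (k : Fin (n + 1))
    (hak : 1 ≤ a k) (hp : 1 ≤ R.pairing (simpleVec k) (R.coroot a)) :
    a = simpleVec k ∨
      (R.IsPosRoot (R.actR (R.cs.simple k) a) ∧
       R.coroot (R.actR (R.cs.simple k) a) =
         R.coroot a - R.pairing (simpleVec k) (R.coroot a) • simpleVec k ∧
       R.cs.length (R.refl (R.actR (R.cs.simple k) a)) + 2 = R.cs.length (R.refl a)) := by
  obtain ⟨⟨w, i, hwa⟩, hpos⟩ := ha
  set β := R.actR (R.cs.simple k) a with hβdef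
  have hβreal : β = R.actR (R.cs.simple k * w) (simpleVec i) := by
    rw [R.actR_mul, ← hwa]
  rcases R.actR_sign (R.cs.simple k * w) i with hge | hle
  · right
    rw [← hβreal] at hge
    refine ⟨⟨⟨_, _, hβreal⟩, hge⟩, ?_, ?_⟩
    · rw [hβdef, R.coroot_act, actC_simple']
    · exact R.length_step ⟨⟨w, i, hwa⟩, hpos⟩ k hak hp hge
  · left
    rw [← hβreal] at hle
    refine R.eq_simpleVec_of_support w i hwa hpos k fun m hm => ?_
    have h1 : β m ≤ 0 := hle m
    have h2 : β m = a m := by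
      rw [hβdef, actR_simple']
      simp [simpleVec_apply, hm]
    have := hpos m
    simp only [Pi.zero_apply] at this
    omega

lemma length_refl_simpleVec (k : Fin (n + 1)) :
    R.cs.length (R.refl (simpleVec k)) = 1 := by
  rw [R.refl_simple, R.cs.length_simple]

/-- The fundamental inequality `ℓ(s_a) ≤ 2 ht(a∨) - 1` for positive real roots. -/
lemma length_refl_le {a : AffLat n} (ha : R.IsPosRoot a) :
    (R.cs.length (R.refl a) : ℤ) ≤ 2 * htv (R.coroot a) - 1 := by
  generalize hL : R.cs.length (R.refl a) = L
  induction L using Nat.strong_induction_on generalizing a with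
  | _ L IH =>
    obtain ⟨k, hak, hp⟩ := R.exists_good_index ha
    rcases R.step_dichotomy ha k hak hp with hsimple | ⟨hβpos, hβcor, hβlen⟩
    · subst hsimple
      rw [length_refl_simpleVec] at hL
      rw [R.coroot_simple, htv_simpleVec]
      omega
    · have hlt : R.cs.length (R.refl (R.actR (R.cs.simple k) a)) < L := by omega
      have := IH _ hlt hβpos rfl
      rw [hβcor, htv_sub_smul] at this
      omega

lemma isChevalley_simple (i : Fin (n + 1)) : R.IsChevalleyRoot (simpleVec i) := by
  refine ⟨⟨⟨1, i, (R.actR_one _).symm⟩, simpleVec_nonneg i⟩, ?_⟩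
  rw [R.length_refl_simpleVec, R.coroot_simple, htv_simpleVec]
  norm_num

/-- The forward direction: every Chevalley root is simple or the end of a chain. -/
lemma chev_forward {a : AffLat n} (hc : R.IsChevalleyRoot a) :
    IsSimpleVec a ∨ ∃ (k : ℕ) (f : ℕ → Fin (n + 1)) (β : ℕ → AffLat n),
      2 ≤ k ∧ R.IsChevalleyChain k f β ∧ a = β (k - 1) := by
  generalize hL : R.cs.length (R.refl a) = L
  induction L using Nat.strong_induction_on generalizing a with
  | _ L IH =>
  obtain ⟨k, hak, hp⟩ := R.exists_good_index hc.1
  rcases R.step_dichotomy hc.1 k hak hp with hsimple | ⟨hβpos, hβcor, hβlen⟩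
  · exact Or.inl ⟨k, hsimple⟩
  · set β := R.actR (R.cs.simple k) a with hβdef
    have hineq := R.length_refl_le hβpos
    rw [hβcor, htv_sub_smul] at hineq
    have hc2 := hc.2
    have hβlenZ : (R.cs.length (R.refl β) : ℤ) + 2 = (R.cs.length (R.refl a) : ℤ) := by
      exact_mod_cast congrArg (Nat.cast : ℕ → ℤ) hβlen
    have hp1 : R.pairing (simpleVec k) (R.coroot a) = 1 := by linarith
    have hβchev : R.IsChevalleyRoot β := by
      refine ⟨hβpos, ?_⟩
      rw [hβcor, htv_sub_smul, hp1]
      linarith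
    have hpairβ : R.pairing (simpleVec k) (R.coroot β) = -1 := by
      rw [hβcor, pairing_sub_smul_right, pairing_simple_simple, R.cartan_diag, hp1]
      ring
    have ha_eq : a = R.actR (R.cs.simple k) β := by
      rw [hβdef, ← R.actR_mul, R.cs.simple_mul_simple_self, R.actR_one]
    rcases IH (R.cs.length (R.refl β)) (by omega) hβchev rfl with
      hβsimple | ⟨k0, f0, β0, hk0, hchain0, hβend⟩
    · -- build a chain of length 2
      obtain ⟨m, hm⟩ := hβsimple
      have hβ1 : R.cs.length (R.refl β) = 1 := by rw [hm, R.length_refl_simpleVec]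
      right
      refine ⟨2, fun j => if j = 0 then m else k, fun j => if j = 0 then simpleVec m else a,
        le_refl 2, ⟨?_, ?_, ?_, ?_, ?_⟩, by norm_num⟩
      · norm_num
      · intro j hj
        have hj0 : j = 0 := by omega
        subst hj0
        norm_num
        rw [ha_eq, hm]
      · intro j hj
        interval_cases j
        · simpa using R.isChevalley_simple m
        · simpa using hc
      · intro j hj
        have hj0 : j = 0 := by omega
        subst hj0
        norm_num
        rw [← hm]
        exact hpairβ
      · norm_num
        omega
    · -- extend the chain by one step
      obtain ⟨hC1, hC2, hC3, hC4, hC5⟩ := hchain0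
      right
      refine ⟨k0 + 1, fun j => if j = k0 then k else f0 j,
        fun j => if j = k0 then a else β0 j, by omega, ⟨?_, ?_, ?_, ?_, ?_⟩, ?_⟩
      · simp only [if_neg (by omega : (0 : ℕ) ≠ k0)]
        exact hC1
      · intro j hj
        beta_reduce
        by_cases hjk : j + 1 = k0
        · rw [if_pos hjk, if_pos hjk, if_neg (by omega : ¬ j = k0),
            (by omega : j = k0 - 1), ← hβend]
          exact ha_eq
        · have h2p : j + 1 < k0 := by omega
          rw [if_neg hjk, if_neg hjk, if_neg (by omega : ¬ j = k0)]
          exact hC2 j h2p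
      · intro j hj
        by_cases hjk : j = k0
        · simp only [if_pos hjk]
          exact hc
        · simp only [if_neg hjk]
          exact hC3 j (by omega)
      · intro j hj
        beta_reduce
        by_cases hjk : j + 1 = k0
        · rw [if_pos hjk, if_neg (by omega : ¬ j = k0), (by omega : j = k0 - 1), ← hβend]
          exact hpairβ
        · rw [if_neg hjk, if_neg (by omega : ¬ j = k0)]
          exact hC4 j (by omega)
      · have hred : k0 + 1 - 1 = k0 := by omega
        rw [hred]
        beta_reduce
        rw [if_pos rfl]
        have hβl : R.cs.length (R.refl β) = 2 * k0 - 1 := by rw [hβend]; exact hC5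
        omega
      · have hred : k0 + 1 - 1 = k0 := by omega
        rw [hred]
        beta_reduce
        rw [if_pos rfl]

/-- Computation of the coroot along a Chevalley chain. -/
lemma chain_coroot {k : ℕ} {f : ℕ → Fin (n + 1)} {β : ℕ → AffLat n}
    (hchain : R.IsChevalleyChain k f β) :
    ∀ j, j < k → R.coroot (β j) = ∑ m ∈ Finset.range (j + 1), simpleVec (f m) := by
  obtain ⟨hC1, hC2, _, hC4, _⟩ := hchain
  intro j
  induction j with
  | zero => intro _; rw [hC1, R.coroot_simple, Finset.sum_range_one]
  | succ j IHj =>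
    intro hj
    rw [hC2 j hj, R.coroot_act, actC_simple', hC4 j hj, IHj (by omega),
      Finset.sum_range_succ, neg_smul, sub_neg_eq_add, one_smul,
      Finset.sum_range_succ, Finset.sum_range_succ]

end Infra

end AffineRootSystem

/-- A positive real affine root `α` satisfies
`ℓ(s_α) = 2 ht(α∨) - 1` if and only if it is simple, or there is a Chevalley chain
`β 0 = α_{i_1}`, `β j = s_{i_{j+1}} ⋯ s_{i_2}(α_{i_1})` of some length `k ≥ 2`
ending at `α`; moreover for any such chain `α∨ = α_{i_1}∨ + ⋯ + α_{i_k}∨`. -/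
theorem chevalley_root_iff_chain {n : ℕ} {W : Type*} [Group W]
    (R : AffineRootSystem n W) (a : AffLat n) (ha : R.IsPosRoot a) :
    (R.IsChevalleyRoot a ↔ (IsSimpleVec a ∨
      ∃ (k : ℕ) (f : ℕ → Fin (n + 1)) (β : ℕ → AffLat n),
        2 ≤ k ∧ R.IsChevalleyChain k f β ∧ a = β (k - 1))) ∧
    (∀ (k : ℕ) (f : ℕ → Fin (n + 1)) (β : ℕ → AffLat n),
        2 ≤ k → R.IsChevalleyChain k f β → a = β (k - 1) →
        R.coroot a = ∑ j ∈ Finset.range k, simpleVec (f j)) := by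
  constructor
  · constructor
    · exact fun hc => R.chev_forward hc
    · rintro (⟨i, rfl⟩ | ⟨k, f, β, hk, hchain, hend⟩)
      · exact R.isChevalley_simple i
      · have := hchain.2.2.1 (k - 1) (by omega)
        rwa [← hend] at this
  · intro k f β hk hchain hend
    rw [hend]
    have := R.chain_coroot hchain (k - 1) (by omega)
    rwa [Nat.sub_add_cancel (by omega : 1 ≤ k)] at this
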